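/- Consider the log-linear model with parameters θ = (θ₁, θ₂, θ₃), θ₂ > 0, θ₃ > 0, on the design region [L,U] with 0 < L < U. Let x_l* = ((L+θ₃)(U+θ₃)/(U−L)) · log((U+θ₃)/(L+θ₃)) − θ₃. The design ξ* that puts weight (U−x_l*)(L+θ₃)/(2(U−L)(x_l*+θ₃)) at L, weight 1/2 at x_l*, and weight (x_l*−L)(U+θ₃)/(2(U−L)(x_l*+θ₃)) at U has all three weights strictly positive summing to 1, has invertible information matrix M_{ξ*}, and for every design ξ on [L,U] whose information matrix M_ξ is invertible, (M_{ξ*}^{−1})₂₂ ≤ (M_ξ^{−1})₂₂; that is, ξ* is e₂-optimal (c-optimal for the parameter θ₂). -/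

import Mathlib

structure Design (I : Set ℝ) where
  pts : Finset ℝ
  w : ℝ → ℝ
  mem_pts : ∀ x ∈ pts, x ∈ I
  w_nonneg : ∀ x ∈ pts, 0 ≤ w x
  w_sum : ∑ x ∈ pts, w x = 1

noncomputable def infoMat {d : ℕ} (M : ℝ → Matrix (Fin d) (Fin d) ℝ) {I : Set ℝ}
    (ξ : Design I) : Matrix (Fin d) (Fin d) ℝ :=
  ∑ x ∈ ξ.pts, ξ.w x • M x

/-- Gradient vector of the log-linear model. -/
noncomputable def fLogLin (θ₂ θ₃ : ℝ) (x : ℝ) : Fin 3 → ℝ :=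
  ![1, Real.log (x + θ₃), θ₂ / (x + θ₃)]

/-- Single-observation information matrix of the log-linear model. -/
noncomputable def logLinInfo (θ₂ θ₃ : ℝ) (x : ℝ) : Matrix (Fin 3) (Fin 3) ℝ :=
  Matrix.vecMulVec (fLogLin θ₂ θ₃ x) (fLogLin θ₂ θ₃ x)

open Matrix

lemma vvt_mulVec (u v : Fin 3 → ℝ) : Matrix.vecMulVec u u *ᵥ v = (u ⬝ᵥ v) • u := by
  ext i
  simp [Matrix.mulVec, Matrix.vecMulVec_apply, dotProduct, Fin.sum_univ_three]
  ring

lemma dot_sum_vvt (s : Finset ℝ) (c : ℝ → ℝ) (g : ℝ → Fin 3 → ℝ) (v w : Fin 3 → ℝ) :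
    v ⬝ᵥ ((∑ x ∈ s, c x • Matrix.vecMulVec (g x) (g x)) *ᵥ w)
      = ∑ x ∈ s, c x * ((g x ⬝ᵥ v) * (g x ⬝ᵥ w)) := by
  classical
  induction s using Finset.cons_induction with
  | empty => simp
  | cons a s ha ih =>
    rw [Finset.sum_cons, Finset.sum_cons, Matrix.add_mulVec, dotProduct_add, ih]
    congr 1
    rw [Matrix.smul_mulVec, vvt_mulVec, dotProduct_smul, dotProduct_smul,
      dotProduct_comm v (g a)]
    simp only [smul_eq_mul]
    ring

lemma det_three_vvt (p q r : ℝ) (u v w : Fin 3 → ℝ) :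
    (p • Matrix.vecMulVec u u + q • Matrix.vecMulVec v v + r • Matrix.vecMulVec w w).det
      = p * q * r * (u 0 * (v 1 * w 2 - v 2 * w 1) - u 1 * (v 0 * w 2 - v 2 * w 0)
        + u 2 * (v 0 * w 1 - v 1 * w 0)) ^ 2 := by
  rw [Matrix.det_fin_three]
  simp only [Matrix.add_apply, Matrix.smul_apply, Matrix.vecMulVec_apply, smul_eq_mul]
  ring

set_option maxHeartbeats 2000000 in
theorem stmt14 (θ₁ θ₂ θ₃ : ℝ) (hθ₂ : 0 < θ₂) (hθ₃ : 0 < θ₃) (L U : ℝ)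
    (hL : 0 < L) (hLU : L < U)
    (xl wL wU : ℝ)
    (hxl : xl = (L + θ₃) * (U + θ₃) / (U - L) * Real.log ((U + θ₃) / (L + θ₃)) - θ₃)
    (hwL : wL = (U - xl) * (L + θ₃) / (2 * (U - L) * (xl + θ₃)))
    (hwU : wU = (xl - L) * (U + θ₃) / (2 * (U - L) * (xl + θ₃))) :
    0 < wL ∧ 0 < wU ∧ wL + 1 / 2 + wU = 1 ∧
    IsUnit (wL • logLinInfo θ₂ θ₃ L + (1 / 2 : ℝ) • logLinInfo θ₂ θ₃ xl +
        wU • logLinInfo θ₂ θ₃ U).det ∧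
    ∀ ξ : Design (Set.Icc L U), IsUnit (infoMat (logLinInfo θ₂ θ₃) ξ).det →
      (wL • logLinInfo θ₂ θ₃ L + (1 / 2 : ℝ) • logLinInfo θ₂ θ₃ xl +
        wU • logLinInfo θ₂ θ₃ U)⁻¹ 1 1 ≤
      (infoMat (logLinInfo θ₂ θ₃) ξ)⁻¹ 1 1 := by
  have h3a : (0:ℝ) < L + θ₃ := by linarith
  have h3b : (0:ℝ) < U + θ₃ := by linarith
  have hUL : (0:ℝ) < U - L := by linarith
  -- basic log facts
  have hlogq : Real.log ((U + θ₃) / (L + θ₃))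
      = Real.log (U + θ₃) - Real.log (L + θ₃) := Real.log_div h3b.ne' h3a.ne'
  have hm1 : xl + θ₃ = (L + θ₃) * (U + θ₃) * (Real.log (U + θ₃) - Real.log (L + θ₃)) / (U - L) := by
    rw [hxl, hlogq]; ring
  -- strict log inequalities
  have hlog1 : Real.log (U + θ₃) - Real.log (L + θ₃) > (U - L) / (U + θ₃) := by
    have h := Real.log_lt_sub_one_of_pos (show (0:ℝ) < (L + θ₃) / (U + θ₃) by positivity)
      (ne_of_lt ((div_lt_one h3b).mpr (by linarith)))
    rw [Real.log_div h3a.ne' h3b.ne'] at h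
    have h2 : (L + θ₃) / (U + θ₃) - 1 = -((U - L) / (U + θ₃)) := by field_simp; ring
    rw [h2] at h; linarith
  have hlog2 : Real.log (U + θ₃) - Real.log (L + θ₃) < (U - L) / (L + θ₃) := by
    have h := Real.log_lt_sub_one_of_pos (show (0:ℝ) < (U + θ₃) / (L + θ₃) by positivity)
      (ne_of_gt ((one_lt_div h3a).mpr (by linarith)))
    rw [Real.log_div h3b.ne' h3a.ne'] at h
    have h2 : (U + θ₃) / (L + θ₃) - 1 = (U - L) / (L + θ₃) := by field_simp; ring
    rw [h2] at h; linarith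
  have ham : L < xl := by
    have h := mul_lt_mul_of_pos_left hlog1 (mul_pos h3a h3b)
    have : L + θ₃ < xl + θ₃ := by
      rw [hm1, lt_div_iff₀ hUL]
      have e : (L + θ₃) * (U + θ₃) * ((U - L) / (U + θ₃)) = (L + θ₃) * (U - L) := by
        field_simp
      nlinarith [h]
    linarith
  have hmb : xl < U := by
    have : xl + θ₃ < U + θ₃ := by
      rw [hm1, div_lt_iff₀ hUL]
      have h := mul_lt_mul_of_pos_left hlog2 (mul_pos h3a h3b)
      have e : (L + θ₃) * (U + θ₃) * ((U - L) / (L + θ₃)) = (U + θ₃) * (U - L) := by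
        field_simp
      nlinarith [h]
    linarith
  have hmpos : (0:ℝ) < xl + θ₃ := by linarith
  have ham' : L + θ₃ < xl + θ₃ := by linarith
  have hmb' : xl + θ₃ < U + θ₃ := by linarith
  -- the multiplied-out defining relation of xl
  have hM : (xl + θ₃) * (U - L)
      = (L + θ₃) * (U + θ₃) * (Real.log (U + θ₃) - Real.log (L + θ₃)) := by
    rw [hm1]; field_simp
  have hlogb : Real.log (U + θ₃)
      = Real.log (L + θ₃) + (xl + θ₃) * (U - L) / ((L + θ₃) * (U + θ₃)) := by
    rw [hM]; field_simp; ring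
  -- D > 0
  obtain ⟨D, hD_def⟩ : ∃ D : ℝ, D = Real.log (L + θ₃) + (xl + θ₃) / (L + θ₃)
      - Real.log (xl + θ₃) - 1 := ⟨_, rfl⟩
  have hD : 0 < D := by
    have h := Real.log_lt_sub_one_of_pos (show (0:ℝ) < (xl + θ₃) / (L + θ₃) by positivity)
      (ne_of_gt ((one_lt_div h3a).mpr (by linarith)))
    rw [Real.log_div hmpos.ne' h3a.ne'] at h
    rw [hD_def]; linarith
  have hlogm : Real.log (xl + θ₃)
      = Real.log (L + θ₃) + (xl + θ₃) / (L + θ₃) - 1 - D := by rw [hD_def]; ring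
  -- weights
  have hwLpos : 0 < wL := by
    rw [hwL]
    apply div_pos (mul_pos (by linarith) h3a)
    positivity
  have hwUpos : 0 < wU := by
    rw [hwU]
    apply div_pos (mul_pos (by linarith) h3b)
    positivity
  have hsum : wL + 1 / 2 + wU = 1 := by
    rw [hwL, hwU]; field_simp; ring
  refine ⟨hwLpos, hwUpos, hsum, ?_⟩
  -- the optimal "Elfving" vector z
  obtain ⟨z, hz⟩ : ∃ z : Fin 3 → ℝ, z = ![2 / D
      - 4 / D ^ 2 * (Real.log (L + θ₃) + (xl + θ₃) / (L + θ₃)), 4 / D ^ 2,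
      4 * (xl + θ₃) / (D ^ 2 * θ₂)] := ⟨_, rfl⟩
  have hdotL : fLogLin θ₂ θ₃ L ⬝ᵥ z = 2 / D := by
    rw [hz]
    simp only [fLogLin, dotProduct, Fin.sum_univ_three, Matrix.cons_val_zero,
      Matrix.cons_val_one, Matrix.head_cons, Matrix.cons_val_two, Matrix.tail_cons]
    field_simp
    ring
  have hdotm : fLogLin θ₂ θ₃ xl ⬝ᵥ z = -(2 / D) := by
    rw [hz]
    simp only [fLogLin, dotProduct, Fin.sum_univ_three, Matrix.cons_val_zero,
      Matrix.cons_val_one, Matrix.head_cons, Matrix.cons_val_two, Matrix.tail_cons]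
    rw [hlogm]
    field_simp
    ring
  have hdotU : fLogLin θ₂ θ₃ U ⬝ᵥ z = 2 / D := by
    rw [hz]
    simp only [fLogLin, dotProduct, Fin.sum_univ_three, Matrix.cons_val_zero,
      Matrix.cons_val_one, Matrix.head_cons, Matrix.cons_val_two, Matrix.tail_cons]
    rw [hlogb]
    field_simp
    ring
  -- pointwise bound
  have hbound : ∀ x ∈ Set.Icc L U, (fLogLin θ₂ θ₃ x ⬝ᵥ z) ^ 2 ≤ (2 / D) ^ 2 := by
    rintro x ⟨hxL, hxU⟩
    have hxt : (0:ℝ) < x + θ₃ := by linarith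
    have hdot : fLogLin θ₂ θ₃ x ⬝ᵥ z = 2 / D
        - 4 / D ^ 2 * (Real.log (L + θ₃) + (xl + θ₃) / (L + θ₃))
        + 4 / D ^ 2 * (Real.log (x + θ₃) + (xl + θ₃) / (x + θ₃)) := by
      rw [hz]
      simp only [fLogLin, dotProduct, Fin.sum_univ_three, Matrix.cons_val_zero,
        Matrix.cons_val_one, Matrix.head_cons, Matrix.cons_val_two, Matrix.tail_cons]
      field_simp
      ring
    have hDsq : (0:ℝ) < 4 / D ^ 2 := by positivity
    have h1 : -(2 / D) ≤ fLogLin θ₂ θ₃ x ⬝ᵥ z := by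
      have hlow : Real.log (xl + θ₃) + 1 ≤ Real.log (x + θ₃) + (xl + θ₃) / (x + θ₃) := by
        have h := Real.log_le_sub_one_of_pos (show (0:ℝ) < (xl + θ₃) / (x + θ₃) by positivity)
        rw [Real.log_div hmpos.ne' hxt.ne'] at h
        linarith
      have e : fLogLin θ₂ θ₃ x ⬝ᵥ z + 2 / D = 4 / D ^ 2
          * ((Real.log (x + θ₃) + (xl + θ₃) / (x + θ₃)) - (Real.log (xl + θ₃) + 1)) := by
        rw [hdot, hlogm]; field_simp; ring
      nlinarith [mul_nonneg hDsq.le (by linarith : (0:ℝ) ≤ (Real.log (x + θ₃) + (xl + θ₃) / (x + θ₃)) - (Real.log (xl + θ₃) + 1))]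
    have h2 : fLogLin θ₂ θ₃ x ⬝ᵥ z ≤ 2 / D := by
      have hG : Real.log (x + θ₃) + (xl + θ₃) / (x + θ₃)
          ≤ Real.log (L + θ₃) + (xl + θ₃) / (L + θ₃) := by
        rcases le_total (x + θ₃) (xl + θ₃) with hc | hc
        · have hlt : Real.log (x + θ₃) - Real.log (L + θ₃) ≤ (x + θ₃) / (L + θ₃) - 1 := by
            have h := Real.log_le_sub_one_of_pos (show (0:ℝ) < (x + θ₃) / (L + θ₃) by positivity)
            rw [Real.log_div hxt.ne' h3a.ne'] at h
            linarith
          have halg : (x + θ₃) / (L + θ₃) - 1 + (xl + θ₃) / (x + θ₃) - (xl + θ₃) / (L + θ₃)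
              = ((x + θ₃) - (L + θ₃)) * ((x + θ₃) - (xl + θ₃)) / ((L + θ₃) * (x + θ₃)) := by
            field_simp; ring
          have hnn : ((x + θ₃) - (L + θ₃)) * ((x + θ₃) - (xl + θ₃)) / ((L + θ₃) * (x + θ₃)) ≤ 0 := by
            apply div_nonpos_of_nonpos_of_nonneg
            · exact mul_nonpos_of_nonneg_of_nonpos (by linarith) (by linarith)
            · positivity
          linarith [halg ▸ hnn]
        · have hGab : Real.log (L + θ₃) + (xl + θ₃) / (L + θ₃)
              = Real.log (U + θ₃) + (xl + θ₃) / (U + θ₃) := by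
            rw [hlogb]; field_simp; ring
          have hlt : Real.log (x + θ₃) - Real.log (U + θ₃) ≤ (x + θ₃) / (U + θ₃) - 1 := by
            have h := Real.log_le_sub_one_of_pos (show (0:ℝ) < (x + θ₃) / (U + θ₃) by positivity)
            rw [Real.log_div hxt.ne' h3b.ne'] at h
            linarith
          have halg : (x + θ₃) / (U + θ₃) - 1 + (xl + θ₃) / (x + θ₃) - (xl + θ₃) / (U + θ₃)
              = ((x + θ₃) - (U + θ₃)) * ((x + θ₃) - (xl + θ₃)) / ((U + θ₃) * (x + θ₃)) := by
            field_simp; ring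
          have hnn : ((x + θ₃) - (U + θ₃)) * ((x + θ₃) - (xl + θ₃)) / ((U + θ₃) * (x + θ₃)) ≤ 0 := by
            apply div_nonpos_of_nonpos_of_nonneg
            · exact mul_nonpos_of_nonpos_of_nonneg (by linarith) (by linarith)
            · positivity
          rw [hGab]
          linarith [halg ▸ hnn]
      have e : 2 / D - fLogLin θ₂ θ₃ x ⬝ᵥ z = 4 / D ^ 2
          * ((Real.log (L + θ₃) + (xl + θ₃) / (L + θ₃))
            - (Real.log (x + θ₃) + (xl + θ₃) / (x + θ₃))) := by
        rw [hdot]; ring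
      nlinarith [mul_nonneg hDsq.le (by linarith : (0:ℝ) ≤ (Real.log (L + θ₃) + (xl + θ₃) / (L + θ₃)) - (Real.log (x + θ₃) + (xl + θ₃) / (x + θ₃)))]
    exact sq_le_sq' h1 h2
  -- the candidate information matrix maps z to e₂
  have hMsz : (wL • logLinInfo θ₂ θ₃ L + (1 / 2 : ℝ) • logLinInfo θ₂ θ₃ xl +
      wU • logLinInfo θ₂ θ₃ U) *ᵥ z = Pi.single 1 1 := by
    unfold logLinInfo
    rw [Matrix.add_mulVec, Matrix.add_mulVec, Matrix.smul_mulVec,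
      Matrix.smul_mulVec, Matrix.smul_mulVec,
      vvt_mulVec, vvt_mulVec, vvt_mulVec, hdotL, hdotm, hdotU]
    funext i
    fin_cases i <;> simp [fLogLin]
    · rw [hwL, hwU]
      field_simp
      ring
    · rw [hwL, hwU, hlogm, hlogb]
      field_simp
      ring
    · rw [hwL, hwU]
      field_simp
      ring
  -- determinant of the candidate information matrix
  have hdetval : (wL • logLinInfo θ₂ θ₃ L + (1 / 2 : ℝ) • logLinInfo θ₂ θ₃ xl +
      wU • logLinInfo θ₂ θ₃ U).det
      = wL * (1 / 2) * wU * (θ₂ * (U - L) * D / ((L + θ₃) * (U + θ₃))) ^ 2 := by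
    unfold logLinInfo
    rw [det_three_vvt]
    have hE : fLogLin θ₂ θ₃ L 0 * (fLogLin θ₂ θ₃ xl 1 * fLogLin θ₂ θ₃ U 2
        - fLogLin θ₂ θ₃ xl 2 * fLogLin θ₂ θ₃ U 1)
        - fLogLin θ₂ θ₃ L 1 * (fLogLin θ₂ θ₃ xl 0 * fLogLin θ₂ θ₃ U 2
        - fLogLin θ₂ θ₃ xl 2 * fLogLin θ₂ θ₃ U 0)
        + fLogLin θ₂ θ₃ L 2 * (fLogLin θ₂ θ₃ xl 0 * fLogLin θ₂ θ₃ U 1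
        - fLogLin θ₂ θ₃ xl 1 * fLogLin θ₂ θ₃ U 0)
        = θ₂ * (U - L) * D / ((L + θ₃) * (U + θ₃)) := by
      simp only [fLogLin, Matrix.cons_val_zero, Matrix.cons_val_one, Matrix.head_cons,
        Matrix.cons_val_two, Matrix.tail_cons]
      rw [hlogm, hlogb]
      field_simp
      ring
    rw [hE]
  have hXpos : 0 < θ₂ * (U - L) * D / ((L + θ₃) * (U + θ₃)) :=
    div_pos (mul_pos (mul_pos hθ₂ hUL) hD) (mul_pos h3a h3b)
  have hdetpos : 0 < (wL • logLinInfo θ₂ θ₃ L + (1 / 2 : ℝ) • logLinInfo θ₂ θ₃ xl +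
      wU • logLinInfo θ₂ θ₃ U).det := by
    rw [hdetval]
    exact mul_pos (mul_pos (mul_pos hwLpos (by norm_num)) hwUpos) (pow_pos hXpos 2)
  have hunit : IsUnit (wL • logLinInfo θ₂ θ₃ L + (1 / 2 : ℝ) • logLinInfo θ₂ θ₃ xl +
      wU • logLinInfo θ₂ θ₃ U).det := isUnit_iff_ne_zero.mpr hdetpos.ne'
  refine ⟨hunit, ?_⟩
  -- the (1,1) entry (0-indexed) of the inverse of the candidate matrix
  have hMsinv : (wL • logLinInfo θ₂ θ₃ L + (1 / 2 : ℝ) • logLinInfo θ₂ θ₃ xl +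
      wU • logLinInfo θ₂ θ₃ U)⁻¹ 1 1 = 4 / D ^ 2 := by
    have h1 : (wL • logLinInfo θ₂ θ₃ L + (1 / 2 : ℝ) • logLinInfo θ₂ θ₃ xl +
        wU • logLinInfo θ₂ θ₃ U)⁻¹ *ᵥ ((wL • logLinInfo θ₂ θ₃ L +
        (1 / 2 : ℝ) • logLinInfo θ₂ θ₃ xl + wU • logLinInfo θ₂ θ₃ U) *ᵥ z) = z := by
      rw [Matrix.mulVec_mulVec, Matrix.nonsing_inv_mul _ hunit, Matrix.one_mulVec]
    rw [hMsz] at h1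
    have h2 := congrFun h1 1
    simpa [Matrix.mulVec_single, hz] using h2
  -- now the optimality claim
  intro ξ hξ
  have hrepr : ∀ v w : Fin 3 → ℝ, v ⬝ᵥ (infoMat (logLinInfo θ₂ θ₃) ξ *ᵥ w)
      = ∑ x ∈ ξ.pts, ξ.w x * ((fLogLin θ₂ θ₃ x ⬝ᵥ v) * (fLogLin θ₂ θ₃ x ⬝ᵥ w)) := by
    intro v w
    rw [show infoMat (logLinInfo θ₂ θ₃) ξ = ∑ x ∈ ξ.pts,
      ξ.w x • Matrix.vecMulVec (fLogLin θ₂ θ₃ x) (fLogLin θ₂ θ₃ x) from rfl]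
    exact dot_sum_vvt ξ.pts ξ.w (fLogLin θ₂ θ₃) v w
  set y := (infoMat (logLinInfo θ₂ θ₃) ξ)⁻¹ *ᵥ Pi.single 1 1 with hy_def
  have hMy : infoMat (logLinInfo θ₂ θ₃) ξ *ᵥ y = Pi.single 1 1 := by
    rw [hy_def, Matrix.mulVec_mulVec, Matrix.mul_nonsing_inv _ hξ, Matrix.one_mulVec]
  have hy1 : y 1 = (infoMat (logLinInfo θ₂ θ₃) ξ)⁻¹ 1 1 := by
    rw [hy_def]; simp [Matrix.mulVec_single]
  have hcross : ∑ x ∈ ξ.pts, ξ.w x * ((fLogLin θ₂ θ₃ x ⬝ᵥ z) * (fLogLin θ₂ θ₃ x ⬝ᵥ y))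
      = 4 / D ^ 2 := by
    rw [← hrepr z y, hMy, dotProduct_single]
    simp [hz]
  have hS2eq : ∑ x ∈ ξ.pts, ξ.w x * ((fLogLin θ₂ θ₃ x ⬝ᵥ y) * (fLogLin θ₂ θ₃ x ⬝ᵥ y))
      = (infoMat (logLinInfo θ₂ θ₃) ξ)⁻¹ 1 1 := by
    rw [← hrepr y y, hMy, dotProduct_single, mul_one, hy1]
  have hS2nn : 0 ≤ ∑ x ∈ ξ.pts, ξ.w x * ((fLogLin θ₂ θ₃ x ⬝ᵥ y) * (fLogLin θ₂ θ₃ x ⬝ᵥ y)) :=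
    Finset.sum_nonneg fun x hx => mul_nonneg (ξ.w_nonneg x hx) (mul_self_nonneg _)
  have hsq : (2 / D) ^ 2 = 4 / D ^ 2 := by rw [div_pow]; norm_num
  have hS1le : ∑ x ∈ ξ.pts, ξ.w x * ((fLogLin θ₂ θ₃ x ⬝ᵥ z) * (fLogLin θ₂ θ₃ x ⬝ᵥ z))
      ≤ 4 / D ^ 2 := by
    calc ∑ x ∈ ξ.pts, ξ.w x * ((fLogLin θ₂ θ₃ x ⬝ᵥ z) * (fLogLin θ₂ θ₃ x ⬝ᵥ z))
        ≤ ∑ x ∈ ξ.pts, ξ.w x * (4 / D ^ 2) := by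
          refine Finset.sum_le_sum fun x hx => mul_le_mul_of_nonneg_left ?_ (ξ.w_nonneg x hx)
          have hb := hbound x (ξ.mem_pts x hx)
          rw [hsq] at hb
          rw [← pow_two]
          exact hb
      _ = 4 / D ^ 2 := by rw [← Finset.sum_mul, ξ.w_sum, one_mul]
  have hCS := Finset.sum_mul_sq_le_sq_mul_sq ξ.pts
    (fun x => Real.sqrt (ξ.w x) * (fLogLin θ₂ θ₃ x ⬝ᵥ z))
    (fun x => Real.sqrt (ξ.w x) * (fLogLin θ₂ θ₃ x ⬝ᵥ y))
  have e1 : ∑ x ∈ ξ.pts, (Real.sqrt (ξ.w x) * (fLogLin θ₂ θ₃ x ⬝ᵥ z))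
      * (Real.sqrt (ξ.w x) * (fLogLin θ₂ θ₃ x ⬝ᵥ y))
      = ∑ x ∈ ξ.pts, ξ.w x * ((fLogLin θ₂ θ₃ x ⬝ᵥ z) * (fLogLin θ₂ θ₃ x ⬝ᵥ y)) :=
    Finset.sum_congr rfl fun x hx => by
      have h := Real.mul_self_sqrt (ξ.w_nonneg x hx)
      calc (Real.sqrt (ξ.w x) * (fLogLin θ₂ θ₃ x ⬝ᵥ z))
          * (Real.sqrt (ξ.w x) * (fLogLin θ₂ θ₃ x ⬝ᵥ y))
          = (Real.sqrt (ξ.w x) * Real.sqrt (ξ.w x))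
            * ((fLogLin θ₂ θ₃ x ⬝ᵥ z) * (fLogLin θ₂ θ₃ x ⬝ᵥ y)) := by ring
        _ = ξ.w x * ((fLogLin θ₂ θ₃ x ⬝ᵥ z) * (fLogLin θ₂ θ₃ x ⬝ᵥ y)) := by rw [h]
  have e2 : ∑ x ∈ ξ.pts, (Real.sqrt (ξ.w x) * (fLogLin θ₂ θ₃ x ⬝ᵥ z)) ^ 2
      = ∑ x ∈ ξ.pts, ξ.w x * ((fLogLin θ₂ θ₃ x ⬝ᵥ z) * (fLogLin θ₂ θ₃ x ⬝ᵥ z)) :=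
    Finset.sum_congr rfl fun x hx => by
      have h := Real.mul_self_sqrt (ξ.w_nonneg x hx)
      calc (Real.sqrt (ξ.w x) * (fLogLin θ₂ θ₃ x ⬝ᵥ z)) ^ 2
          = (Real.sqrt (ξ.w x) * Real.sqrt (ξ.w x))
            * ((fLogLin θ₂ θ₃ x ⬝ᵥ z) * (fLogLin θ₂ θ₃ x ⬝ᵥ z)) := by ring
        _ = _ := by rw [h]
  have e3 : ∑ x ∈ ξ.pts, (Real.sqrt (ξ.w x) * (fLogLin θ₂ θ₃ x ⬝ᵥ y)) ^ 2
      = ∑ x ∈ ξ.pts, ξ.w x * ((fLogLin θ₂ θ₃ x ⬝ᵥ y) * (fLogLin θ₂ θ₃ x ⬝ᵥ y)) :=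
    Finset.sum_congr rfl fun x hx => by
      have h := Real.mul_self_sqrt (ξ.w_nonneg x hx)
      calc (Real.sqrt (ξ.w x) * (fLogLin θ₂ θ₃ x ⬝ᵥ y)) ^ 2
          = (Real.sqrt (ξ.w x) * Real.sqrt (ξ.w x))
            * ((fLogLin θ₂ θ₃ x ⬝ᵥ y) * (fLogLin θ₂ θ₃ x ⬝ᵥ y)) := by ring
        _ = _ := by rw [h]
  rw [e1, e2, e3, hcross, hS2eq] at hCS
  have hV : (0 : ℝ) < 4 / D ^ 2 := by positivity
  have hfin : 4 / D ^ 2 ≤ (infoMat (logLinInfo θ₂ θ₃) ξ)⁻¹ 1 1 := by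
    have h2 : (0:ℝ) ≤ (infoMat (logLinInfo θ₂ θ₃) ξ)⁻¹ 1 1 := by
      rw [← hS2eq]; exact hS2nn
    have hstep : (4 / D ^ 2) * (4 / D ^ 2) ≤ (4 / D ^ 2) * ((infoMat (logLinInfo θ₂ θ₃) ξ)⁻¹ 1 1) := by
      calc (4 / D ^ 2) * (4 / D ^ 2) = (4 / D ^ 2) ^ 2 := (pow_two _).symm
        _ ≤ (∑ x ∈ ξ.pts, ξ.w x * ((fLogLin θ₂ θ₃ x ⬝ᵥ z) * (fLogLin θ₂ θ₃ x ⬝ᵥ z)))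
            * ((infoMat (logLinInfo θ₂ θ₃) ξ)⁻¹ 1 1) := hCS
        _ ≤ (4 / D ^ 2) * ((infoMat (logLinInfo θ₂ θ₃) ξ)⁻¹ 1 1) :=
            mul_le_mul_of_nonneg_right hS1le h2
    exact le_of_mul_le_mul_left hstep hV
  rw [hMsinv]
  exact hfin
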